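/- Let X be a zero-mean wide-sense stationary Gaussian signal of length L with periodic boundary conditions, whose power spectrum S_X satisfies S_X(0)=0 (and S_X(L/2)=0 if L is even). Then its discrete analytic signal Z, obtained by keeping only positive-frequency Fourier coefficients (doubled), is a circular complex Gaussian random vector, i.e. its relation matrix R_Z(t,s)=E[Z_t Z_s] vanishes identically. -/

import Mathlib

open MeasureTheory ProbabilityTheory Complex Finset
noncomputable section
open Real
open scoped NNReal

/-- The character `e^{2πin/L}`. -/
def fchar (L : ℕ) (n : ℤ) : ℂ := Complex.exp (2 * Real.pi * Complex.I * n / L)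

lemma fchar_add (L : ℕ) (a b : ℤ) : fchar L (a + b) = fchar L a * fchar L b := by
  unfold fchar
  rw [← Complex.exp_add]
  congr 1
  push_cast
  ring

lemma fchar_zero (L : ℕ) : fchar L 0 = 1 := by simp [fchar]

lemma fchar_int_mul_self (L : ℕ) [NeZero L] (q : ℤ) : fchar L ((L : ℤ) * q) = 1 := by
  unfold fchar
  have hL : (L : ℂ) ≠ 0 := Nat.cast_ne_zero.mpr (NeZero.ne L)
  have : 2 * (Real.pi : ℂ) * Complex.I * ((L : ℤ) * q : ℤ) / L = q * (2 * Real.pi * Complex.I) := by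
    push_cast
    field_simp
  rw [this, Complex.exp_int_mul_two_pi_mul_I]

lemma fchar_congr {L : ℕ} [NeZero L] {a b : ℤ} (h : (a : ZMod L) = (b : ZMod L)) :
    fchar L a = fchar L b := by
  have : ((a - b : ℤ) : ZMod L) = 0 := by push_cast [h]; ring
  obtain ⟨q, hq⟩ := (ZMod.intCast_zmod_eq_zero_iff_dvd _ _).mp this
  have ha : a = b + (L : ℤ) * q := by linarith [hq]
  rw [ha, fchar_add, fchar_int_mul_self, mul_one]

lemma fchar_pow (L : ℕ) (m : ℤ) (n : ℕ) : fchar L (m * n) = fchar L m ^ n := by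
  unfold fchar
  rw [← Complex.exp_nat_mul]
  congr 1
  push_cast
  ring

lemma fchar_ne_one {L : ℕ} [NeZero L] {m : ℤ} (hm : (m : ZMod L) ≠ 0) : fchar L m ≠ 1 := by
  intro h
  apply hm
  rw [fchar, Complex.exp_eq_one_iff] at h
  obtain ⟨n, hn⟩ := h
  have hL : (L : ℂ) ≠ 0 := Nat.cast_ne_zero.mpr (NeZero.ne L)
  have hI : (2 : ℂ) * Real.pi * Complex.I ≠ 0 := by
    simp [Real.pi_ne_zero, Complex.I_ne_zero]
  have hdiv : (2 : ℂ) * Real.pi * Complex.I * ((m : ℂ) / L) =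
      2 * Real.pi * Complex.I * n := by
    rw [← mul_div_assoc, hn]; ring
  have h2 : (m : ℂ) / L = n := mul_left_cancel₀ hI hdiv
  have h3 : (m : ℂ) = (n : ℂ) * L := by
    field_simp at h2; linear_combination h2
  have : m = n * L := by exact_mod_cast h3
  rw [this]
  push_cast
  simp

lemma fchar_L_pow (L : ℕ) [NeZero L] (m : ℤ) : fchar L m ^ L = 1 := by
  rw [← fchar_pow]
  have : m * (L : ℕ) = (L : ℤ) * m := by push_cast; ring
  rw [this, fchar_int_mul_self]

lemma sum_zmod_val {L : ℕ} [NeZero L] (f : ℕ → ℂ) :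
    ∑ v : ZMod L, f v.val = ∑ i ∈ Finset.range L, f i := by
  refine Finset.sum_nbij' (fun v => v.val) (fun i => (i : ZMod L)) ?_ ?_ ?_ ?_ ?_
  · intro v _; exact Finset.mem_range.mpr (ZMod.val_lt v)
  · intro i _; exact Finset.mem_univ _
  · intro v _; exact ZMod.natCast_rightInverse v
  · intro i hi; exact ZMod.val_cast_of_lt (Finset.mem_range.mp hi)
  · intro v _; rfl

lemma fchar_sum_eq_zero {L : ℕ} [NeZero L] {m : ℤ} (hm : (m : ZMod L) ≠ 0) :
    ∑ v : ZMod L, fchar L (m * v.val) = 0 := by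
  have h1 : ∀ v : ZMod L, fchar L (m * v.val) = fchar L m ^ v.val := fun v => fchar_pow L m v.val
  simp_rw [h1]
  rw [sum_zmod_val (fun i => fchar L m ^ i), geom_sum_eq (fchar_ne_one hm), fchar_L_pow]
  simp
noncomputable section

lemma integrable_sq_exp_neg_mul_sq {b : ℝ} (hb : 0 < b) :
    Integrable (fun x : ℝ => x ^ 2 * Real.exp (-b * x ^ 2)) := by
  have hb2 : 0 < b / 2 := by linarith
  refine Integrable.mono' ((integrable_exp_neg_mul_sq hb2).const_mul (2 / b)) ?_ ?_
  · exact ((measurable_id.pow_const 2).mul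
      (((measurable_id.pow_const 2).const_mul (-b)).exp)).aestronglyMeasurable
  · refine Filter.Eventually.of_forall fun x => ?_
    rw [Real.norm_eq_abs, abs_mul, _root_.abs_of_nonneg (sq_nonneg x), _root_.abs_of_nonneg (Real.exp_pos _).le]
    have h1 : x ^ 2 ≤ 2 / b * Real.exp (b / 2 * x ^ 2) := by
      have h0 := Real.add_one_le_exp (b / 2 * x ^ 2)
      have hpos : (0:ℝ) < 2 / b := by positivity
      have h2 : 2 / b * (b / 2 * x ^ 2 + 1) ≤ 2 / b * Real.exp (b / 2 * x ^ 2) :=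
        mul_le_mul_of_nonneg_left h0 hpos.le
      have h3 : 2 / b * (b / 2 * x ^ 2 + 1) = x ^ 2 + 2 / b := by
        field_simp
      linarith
    calc x ^ 2 * Real.exp (-b * x ^ 2)
        ≤ 2 / b * Real.exp (b / 2 * x ^ 2) * Real.exp (-b * x ^ 2) :=
          mul_le_mul_of_nonneg_right h1 (Real.exp_pos _).le
      _ = 2 / b * Real.exp (-(b / 2) * x ^ 2) := by
          rw [mul_assoc, ← Real.exp_add]; ring_nf

lemma integrable_sq_gaussianReal (m : ℝ) (v : ℝ≥0) :
    Integrable (fun x : ℝ => x ^ 2) (gaussianReal m v) := by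
  rcases eq_or_ne v 0 with hv | hv
  · rw [hv, gaussianReal_zero_var]
    refine Integrable.congr (integrable_const (m ^ 2)) ?_
    rw [Filter.EventuallyEq, ae_dirac_eq]
    simp
  · rw [gaussianReal_of_var_ne_zero _ hv]
    rw [integrable_withDensity_iff (measurable_gaussianPDF _ _)
      (Filter.Eventually.of_forall fun x => ENNReal.ofReal_lt_top)]
    have heq : ∀ x : ℝ, x ^ 2 * (gaussianPDF m v x).toReal =
        (Real.sqrt (2 * Real.pi * v))⁻¹ * (x ^ 2 * Real.exp (-(2 * v : ℝ)⁻¹ * (x - m) ^ 2)) := by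
      intro x
      rw [gaussianPDF, ENNReal.toReal_ofReal (gaussianPDFReal_nonneg _ _ _), gaussianPDFReal]
      have : -(x - m) ^ 2 / (2 * v) = -(2 * (v : ℝ))⁻¹ * (x - m) ^ 2 := by
        field_simp
      rw [this]; ring
    simp_rw [heq]
    refine Integrable.const_mul ?_ _
    have hb : 0 < (2 * (v : ℝ))⁻¹ := by
      have : (0 : ℝ) < v := lt_of_le_of_ne v.coe_nonneg (by exact_mod_cast (Ne.symm hv))
      positivity
    set b := (2 * (v : ℝ))⁻¹
    have key : Integrable (fun x : ℝ => (x + m) ^ 2 * Real.exp (-b * x ^ 2)) := by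
      have : ∀ x : ℝ, (x + m) ^ 2 * Real.exp (-b * x ^ 2) =
          x ^ 2 * Real.exp (-b * x ^ 2) + (2 * m) * (x * Real.exp (-b * x ^ 2))
          + m ^ 2 * Real.exp (-b * x ^ 2) := by intro x; ring
      simp_rw [this]
      exact ((integrable_sq_exp_neg_mul_sq hb).add
        ((integrable_mul_exp_neg_mul_sq hb).const_mul _)).add
        ((integrable_exp_neg_mul_sq hb).const_mul _)
    have := key.comp_sub_right m
    simpa using this

lemma memℒp_two_id_gaussianReal (m : ℝ) (v : ℝ≥0) :
    MemLp (fun x : ℝ => x) 2 (gaussianReal m v) :=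
  (memLp_two_iff_integrable_sq aestronglyMeasurable_id).mpr (integrable_sq_gaussianReal m v)

/-- Unnormalized discrete Fourier transform of a signal of length `L`. -/
def dft {L : ℕ} [NeZero L] (x : ZMod L → ℂ) (k : ZMod L) : ℂ :=
  ∑ t : ZMod L, x t * fchar L (-((k.val : ℤ) * t.val))

/-- The set of positive frequencies `I_L^+ \ {0}`, i.e. `[1, L/2]` for even `L`
and `[1, (L-1)/2]` for odd `L`. -/
def posFreq (L : ℕ) [NeZero L] : Finset (ZMod L) :=
  Finset.univ.filter fun k => 1 ≤ k.val ∧ 2 * k.val ≤ L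

lemma claimT {L : ℕ} [NeZero L] (c : ZMod L → ℝ) (S : ZMod L → ℂ)
    (hspec : ∀ k : ZMod L, S k = dft (fun u => (c u : ℂ)) k)
    (hShalf : ∀ _ : 2 ∣ L, S ((L / 2 : ℕ) : ZMod L) = 0)
    {k l : ZMod L} (hk : k ∈ posFreq L) (hl : l ∈ posFreq L) :
    ∑ u : ZMod L, ∑ v : ZMod L,
      (fchar L (-((k.val : ℤ) * u.val)) * fchar L (-((l.val : ℤ) * v.val)))
        * ((c (u - v) : ℝ) : ℂ) = 0 := by
  have hstep : ∑ u : ZMod L, ∑ v : ZMod L,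
      (fchar L (-((k.val : ℤ) * u.val)) * fchar L (-((l.val : ℤ) * v.val))) * ((c (u - v) : ℝ) : ℂ)
      = (∑ v : ZMod L, fchar L ((-((k.val : ℤ) + l.val)) * v.val))
        * (∑ d : ZMod L, fchar L (-((k.val : ℤ) * d.val)) * ((c d : ℝ) : ℂ)) := by
    rw [Finset.sum_comm]
    have inner : ∀ v : ZMod L,
        (∑ u : ZMod L, (fchar L (-((k.val : ℤ) * u.val)) * fchar L (-((l.val : ℤ) * v.val)))
          * ((c (u - v) : ℝ) : ℂ))
        = fchar L ((-((k.val : ℤ) + l.val)) * v.val)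
            * ∑ d : ZMod L, fchar L (-((k.val : ℤ) * d.val)) * ((c d : ℝ) : ℂ) := by
      intro v
      rw [← Equiv.sum_comp (Equiv.addLeft v)
        (fun u => (fchar L (-((k.val : ℤ) * u.val)) * fchar L (-((l.val : ℤ) * v.val)))
          * ((c (u - v) : ℝ) : ℂ)), Finset.mul_sum]
      refine Finset.sum_congr rfl fun d _ => ?_
      have h1 : (Equiv.addLeft v) d - v = d := by
        simp [Equiv.addLeft]
      have h2 : fchar L (-((k.val : ℤ) * ((Equiv.addLeft v) d).val))
          = fchar L (-((k.val : ℤ) * v.val)) * fchar L (-((k.val : ℤ) * d.val)) := by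
        rw [← fchar_add]
        apply fchar_congr
        push_cast [ZMod.natCast_val, ZMod.cast_id]
        simp [Equiv.addLeft]
        ring
      have h3 : fchar L ((-((k.val : ℤ) + l.val)) * v.val)
          = fchar L (-((k.val : ℤ) * v.val)) * fchar L (-((l.val : ℤ) * v.val)) := by
        rw [← fchar_add]
        congr 1
        ring
      rw [h1, h2, h3]
      ring
    rw [Finset.sum_congr rfl fun v _ => inner v, ← Finset.sum_mul]
  rw [hstep]
  obtain ⟨-, hk1, hk2⟩ := Finset.mem_filter.mp hk
  obtain ⟨-, hl1, hl2⟩ := Finset.mem_filter.mp hl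
  by_cases hkl : k + l = 0
  · -- second factor is S k = 0
    have hkne : k ≠ 0 := fun h => by simp [h, ZMod.val_zero] at hk1
    have hlk : l = -k := eq_neg_of_add_eq_zero_right hkl
    have hvl : l.val = L - k.val := by
      rw [hlk, ZMod.neg_val]
      simp [hkne]
    have hvk : k.val < L := ZMod.val_lt k
    have h2k : 2 * k.val = L := by omega
    have hdvd : 2 ∣ L := ⟨k.val, h2k.symm⟩
    have hk2' : ((L / 2 : ℕ) : ZMod L) = k := by
      rw [show L / 2 = k.val by omega]
      exact ZMod.natCast_rightInverse k
    have hfac : (∑ d : ZMod L, fchar L (-((k.val : ℤ) * d.val)) * ((c d : ℝ) : ℂ)) = S k := by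
      rw [hspec]
      unfold dft
      exact Finset.sum_congr rfl fun d _ => mul_comm _ _
    rw [hfac, ← hk2', hShalf hdvd, mul_zero]
  · have hm : (((-((k.val : ℤ) + l.val)) : ℤ) : ZMod L) ≠ 0 := by
      push_cast [ZMod.natCast_val, ZMod.cast_id]
      intro h
      exact hkl (by linear_combination -h)
    rw [fchar_sum_eq_zero hm, zero_mul]

/-- A real random vector is (jointly) Gaussian if every linear combination of its
coordinates has a Gaussian law. -/
def IsRealGaussian {Ω : Type*} [MeasurableSpace Ω] (μ : Measure Ω) {ι : Type*} [Fintype ι]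
    (X : Ω → ι → ℝ) : Prop :=
  ∀ c : ι → ℝ, ∃ m v, Measure.map (fun ω => ∑ i, c i * X ω i) μ = gaussianReal m v

/-- A complex random vector is (jointly) Gaussian if every real-linear functional of its
coordinates has a Gaussian law. -/
def IsComplexGaussian {Ω : Type*} [MeasurableSpace Ω] (μ : Measure Ω) {ι : Type*} [Fintype ι]
    (X : Ω → ι → ℂ) : Prop :=
  ∀ c : ι → ℂ, ∃ m v, Measure.map (fun ω => (∑ i, c i * X ω i).re) μ = gaussianReal m v

/-- The discrete analytic signal of a real signal: zero the negative-frequency Fourier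
coefficients and double the positive ones. -/
def analyticSignal {L : ℕ} [NeZero L] (x : ZMod L → ℝ) (t : ZMod L) : ℂ :=
  (L : ℂ)⁻¹ * ∑ k ∈ posFreq L, 2 * dft (fun s => (x s : ℂ)) k * fchar L ((k.val : ℤ) * t.val)

lemma analyticSignal_linear {L : ℕ} [NeZero L] (x : ZMod L → ℝ) (t : ZMod L) :
    analyticSignal x t = ∑ u : ZMod L, ((L : ℂ)⁻¹ * ∑ k ∈ posFreq L,
      2 * fchar L (-((k.val : ℤ) * u.val)) * fchar L ((k.val : ℤ) * t.val)) * (x u : ℂ) := by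
  unfold analyticSignal dft
  simp only [Finset.mul_sum, Finset.sum_mul]
  rw [Finset.sum_comm]
  exact Finset.sum_congr rfl fun u _ => Finset.sum_congr rfl fun k _ => by ring

/-- if `X` is a zero-mean wide-sense stationary real Gaussian signal whose power
spectrum `S` vanishes at frequency `0` (and at `L/2` when `L` is even), then its analytic
signal `Z` is a circular complex Gaussian vector: it is Gaussian and its relation matrix
`E[Z_t Z_s]` vanishes identically. -/
theorem analyticSignal_circular_gaussian
    {Ω : Type*} [MeasurableSpace Ω] (μ : Measure Ω) [IsProbabilityMeasure μ]
    {L : ℕ} [NeZero L] (X : Ω → ZMod L → ℝ)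
    (hGauss : IsRealGaussian μ X)
    (hmean : ∀ t, ∫ ω, X ω t ∂μ = 0)
    (c : ZMod L → ℝ) (S : ZMod L → ℂ)
    (hWSS : ∀ t s : ZMod L, ∫ ω, X ω t * X ω s ∂μ = c (t - s))
    (hspec : ∀ k : ZMod L, S k = dft (fun u => (c u : ℂ)) k)
    (hS0 : S 0 = 0)
    (hShalf : ∀ h : 2 ∣ L, S ((L / 2 : ℕ) : ZMod L) = 0)
    (Z : Ω → ZMod L → ℂ) (hZ : ∀ ω t, Z ω t = analyticSignal (X ω) t) :
    IsComplexGaussian μ Z ∧ ∀ t s : ZMod L, ∫ ω, Z ω t * Z ω s ∂μ = 0 := by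
  -- coordinates are Gaussian
  have hXt : ∀ t, ∃ m v, Measure.map (fun ω => X ω t) μ = gaussianReal m v := by
    intro t
    obtain ⟨m, v, h⟩ := hGauss (fun i => if i = t then 1 else 0)
    refine ⟨m, v, ?_⟩
    have heq : (fun ω => ∑ i, (if i = t then (1 : ℝ) else 0) * X ω i) = fun ω => X ω t := by
      funext ω
      simp [ite_mul]
    rw [← heq]
    exact h
  have hmeas : ∀ t, AEMeasurable (fun ω => X ω t) μ := by
    intro t
    obtain ⟨m, v, h⟩ := hXt t
    by_contra hc
    rw [Measure.map_of_not_aemeasurable hc] at h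
    exact (IsProbabilityMeasure.ne_zero (gaussianReal m v)) h.symm
  have hL2 : ∀ t, MemLp (fun ω => X ω t) 2 μ := by
    intro t
    obtain ⟨m, v, h⟩ := hXt t
    have h2 := memℒp_two_id_gaussianReal m v
    rw [← h] at h2
    exact (memLp_map_measure_iff aestronglyMeasurable_id (hmeas t)).mp h2
  have hint : ∀ u v : ZMod L, Integrable (fun ω => X ω u * X ω v) μ := by
    intro u v
    have h1 := ((hL2 u).add (hL2 v)).integrable_sq
    have h2 := (hL2 u).integrable_sq
    have h3 := (hL2 v).integrable_sq
    refine (((h1.sub h2).sub h3).div_const 2).congr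
      (Filter.Eventually.of_forall fun ω => ?_)
    show ((((fun ω => X ω u) + fun ω => X ω v) ω) ^ 2 - X ω u ^ 2 - X ω v ^ 2) / 2
        = X ω u * X ω v
    simp only [Pi.add_apply]
    ring
  constructor
  · -- complex Gaussian
    intro c'
    obtain ⟨m, v, h⟩ := hGauss (fun u => (∑ t, c' t * ((L : ℂ)⁻¹ * ∑ k ∈ posFreq L,
      2 * fchar L (-((k.val : ℤ) * u.val)) * fchar L ((k.val : ℤ) * t.val))).re)
    refine ⟨m, v, ?_⟩
    rw [← h]
    congr 1
    funext ω
    have key : (∑ i, c' i * Z ω i)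
        = ∑ u : ZMod L, (∑ t, c' t * ((L : ℂ)⁻¹ * ∑ k ∈ posFreq L,
            2 * fchar L (-((k.val : ℤ) * u.val)) * fchar L ((k.val : ℤ) * t.val)))
          * ((X ω u : ℝ) : ℂ) := by
      simp only [hZ, analyticSignal_linear]
      simp only [Finset.mul_sum, Finset.sum_mul]
      rw [Finset.sum_comm]
      exact Finset.sum_congr rfl fun u _ => Finset.sum_congr rfl fun t' _ =>
        Finset.sum_congr rfl fun k _ => by ring
    rw [key, Complex.re_sum]
    refine Finset.sum_congr rfl fun u _ => ?_
    simp [Complex.mul_re]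
  · -- vanishing relation matrix
    intro t s
    set D : ZMod L → Ω → ℂ := fun k ω => dft (fun u => (X ω u : ℂ)) k with hD
    have hDD : ∀ k l : ZMod L, ∀ ω, D k ω * D l ω
        = ∑ u : ZMod L, ∑ v : ZMod L,
            (fchar L (-((k.val : ℤ) * u.val)) * fchar L (-((l.val : ℤ) * v.val)))
              * ((X ω u * X ω v : ℝ) : ℂ) := by
      intro k l ω
      simp only [hD, dft]
      rw [Finset.sum_mul_sum]
      refine Finset.sum_congr rfl fun u _ => Finset.sum_congr rfl fun v' _ => ?_
      push_cast
      ring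
    have hDint : ∀ k l : ZMod L, Integrable (fun ω => D k ω * D l ω) μ := by
      intro k l
      rw [show (fun ω => D k ω * D l ω) = fun ω => ∑ u : ZMod L, ∑ v : ZMod L,
          (fchar L (-((k.val : ℤ) * u.val)) * fchar L (-((l.val : ℤ) * v.val)))
            * ((X ω u * X ω v : ℝ) : ℂ) from funext (hDD k l)]
      exact integrable_finset_sum _ fun u _ => integrable_finset_sum _ fun v' _ =>
        ((hint u v').ofReal).const_mul _
    have hDzero : ∀ k ∈ posFreq L, ∀ l ∈ posFreq L, ∫ ω, D k ω * D l ω ∂μ = 0 := by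
      intro k hk l hl
      rw [show (fun ω => D k ω * D l ω) = fun ω => ∑ u : ZMod L, ∑ v : ZMod L,
          (fchar L (-((k.val : ℤ) * u.val)) * fchar L (-((l.val : ℤ) * v.val)))
            * ((X ω u * X ω v : ℝ) : ℂ) from funext (hDD k l)]
      have hI1 : ∀ u v' : ZMod L, Integrable (fun ω =>
          (fchar L (-((k.val : ℤ) * u.val)) * fchar L (-((l.val : ℤ) * v'.val)))
            * ((X ω u * X ω v' : ℝ) : ℂ)) μ :=
        fun u v' => ((hint u v').ofReal).const_mul _
      rw [integral_finset_sum _ fun u _ => integrable_finset_sum _ fun v' _ => hI1 u v']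
      have : ∀ u : ZMod L, ∫ ω, (∑ v' : ZMod L,
          (fchar L (-((k.val : ℤ) * u.val)) * fchar L (-((l.val : ℤ) * v'.val)))
            * ((X ω u * X ω v' : ℝ) : ℂ)) ∂μ
          = ∑ v' : ZMod L,
              (fchar L (-((k.val : ℤ) * u.val)) * fchar L (-((l.val : ℤ) * v'.val)))
                * ((c (u - v') : ℝ) : ℂ) := by
        intro u
        rw [integral_finset_sum _ fun v' _ => hI1 u v']
        refine Finset.sum_congr rfl fun v' _ => ?_
        rw [integral_const_mul,
          show (∫ ω, ((X ω u * X ω v' : ℝ) : ℂ) ∂μ) = ((∫ ω, X ω u * X ω v' ∂μ : ℝ) : ℂ)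
            from integral_ofReal, hWSS]
      rw [Finset.sum_congr rfl fun u _ => this u]
      exact claimT c S hspec hShalf hk hl
    have hprod : ∀ ω, Z ω t * Z ω s = ∑ k ∈ posFreq L, ∑ l ∈ posFreq L,
        (((L : ℂ)⁻¹ * (2 * fchar L ((k.val : ℤ) * t.val)))
          * ((L : ℂ)⁻¹ * (2 * fchar L ((l.val : ℤ) * s.val)))) * (D k ω * D l ω) := by
      intro ω
      rw [hZ, hZ]
      unfold analyticSignal
      rw [Finset.mul_sum, Finset.mul_sum, Finset.sum_mul_sum]
      exact Finset.sum_congr rfl fun k _ => Finset.sum_congr rfl fun l _ => by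
        simp only [hD]
        ring
    rw [show (fun ω => Z ω t * Z ω s) = fun ω => ∑ k ∈ posFreq L, ∑ l ∈ posFreq L,
        (((L : ℂ)⁻¹ * (2 * fchar L ((k.val : ℤ) * t.val)))
          * ((L : ℂ)⁻¹ * (2 * fchar L ((l.val : ℤ) * s.val)))) * (D k ω * D l ω)
      from funext hprod]
    rw [integral_finset_sum _ fun k _ => integrable_finset_sum _ fun l _ =>
      (hDint k l).const_mul _]
    refine Finset.sum_eq_zero fun k hk => ?_
    rw [integral_finset_sum _ fun l _ => (hDint k l).const_mul _]
    refine Finset.sum_eq_zero fun l hl => ?_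
    rw [integral_const_mul, hDzero k hk l hl, mul_zero]
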